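/- Each letter of a Sturmian word has exactly two semi-abelian returns (which coincide with its ordinary return words). -/
import Mathlib


/-- The factor of length `n` of the infinite word `w` starting at position `i`. -/
def wordAt {α : Type*} (w : ℕ → α) (i n : ℕ) : List α :=
  (List.range n).map (fun k => w (i + k))

/-- `u` is a factor of the infinite word `w`. -/
def IsFactorW {α : Type*} (w : ℕ → α) (u : List α) : Prop :=
  ∃ i, u = wordAt w i u.length

/-- `w` is recurrent: every factor occurs infinitely often. -/
def RecurrentW {α : Type*} (w : ℕ → α) : Prop :=
  ∀ u, IsFactorW w u → ∀ N, ∃ i, N ≤ i ∧ u = wordAt w i u.length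

/-- `w` is (purely) periodic. -/
def PeriodicW {α : Type*} (w : ℕ → α) : Prop :=
  ∃ T, 0 < T ∧ ∀ n, w (n + T) = w n

/-- `w` is ultimately periodic. -/
def UltPeriodicW {α : Type*} (w : ℕ → α) : Prop :=
  ∃ T, 0 < T ∧ ∃ n₀, ∀ n, n₀ ≤ n → w (n + T) = w n

/-- Two finite words are abelian equivalent: same number of occurrences of each letter. -/
def AbEquiv {α : Type*} [DecidableEq α] (u v : List α) : Prop :=
  ∀ a : α, u.count a = v.count a

/-- Positions of occurrences of words abelian equivalent to `u` in `w`. -/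
def abOcc {α : Type*} [DecidableEq α] (w : ℕ → α) (u : List α) : Set ℕ :=
  {i | AbEquiv (wordAt w i u.length) u}

/-- The semi-abelian returns to (the abelian class of) `u` in `w`: words extending from one
occurrence of the abelian class of `u` to the next one. -/
def semiAbReturns {α : Type*} [DecidableEq α] (w : ℕ → α) (u : List α) : Set (List α) :=
  {r | ∃ i j, i ∈ abOcc w u ∧ j ∈ abOcc w u ∧ i < j ∧
      (∀ k, i < k → k < j → k ∉ abOcc w u) ∧ r = wordAt w i (j - i)}

/-- Positions of (exact) occurrences of `u` in `w`. -/
def occW {α : Type*} [DecidableEq α] (w : ℕ → α) (u : List α) : Set ℕ :=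
  {i | u = wordAt w i u.length}

/-- The ordinary return words of `u` in `w`. -/
def returnWords {α : Type*} [DecidableEq α] (w : ℕ → α) (u : List α) : Set (List α) :=
  {r | ∃ i j, i ∈ occW w u ∧ j ∈ occW w u ∧ i < j ∧
      (∀ k, i < k → k < j → k ∉ occW w u) ∧ r = wordAt w i (j - i)}

/-- `u` has exactly `k` semi-abelian returns in `w`. -/
def ExactlyKSemiAbReturns {α : Type*} [DecidableEq α] (w : ℕ → α) (u : List α) (k : ℕ) : Prop :=
  ∃ f : Fin k → List α, Function.Injective f ∧ semiAbReturns w u = Set.range f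

/-- `u` has exactly `k` abelian returns in `w`: there are `k` pairwise non-abelian-equivalent
representatives so that every semi-abelian return is abelian equivalent to exactly one of them,
and each representative is realized. -/
def ExactlyKAbReturns {α : Type*} [DecidableEq α] (w : ℕ → α) (u : List α) (k : ℕ) : Prop :=
  ∃ f : Fin k → List α,
    (∀ i j, AbEquiv (f i) (f j) → i = j) ∧
    (∀ r ∈ semiAbReturns w u, ∃ i, AbEquiv r (f i)) ∧
    (∀ i, ∃ r ∈ semiAbReturns w u, AbEquiv r (f i))

/-- `u` has at most `k` abelian returns in `w`. -/
def AtMostKAbReturns {α : Type*} [DecidableEq α] (w : ℕ → α) (u : List α) (k : ℕ) : Prop :=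
  ∃ f : Fin k → List α, ∀ r ∈ semiAbReturns w u, ∃ i, AbEquiv r (f i)

/-- `u` has at least `k` abelian returns in `w`. -/
def AtLeastKAbReturns {α : Type*} [DecidableEq α] (w : ℕ → α) (u : List α) (k : ℕ) : Prop :=
  ∃ f : Fin k → List α,
    (∀ i j, AbEquiv (f i) (f j) → i = j) ∧
    (∀ i, ∃ r ∈ semiAbReturns w u, AbEquiv r (f i))

/-- `u` has at least two semi-abelian returns in `w`. -/
def AtLeastTwoSemiAbReturns {α : Type*} [DecidableEq α] (w : ℕ → α) (u : List α) : Prop :=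
  ∃ r₁ r₂, r₁ ∈ semiAbReturns w u ∧ r₂ ∈ semiAbReturns w u ∧ r₁ ≠ r₂

/-- The factor complexity of `w`. -/
noncomputable def complexityW {α : Type*} (w : ℕ → α) (n : ℕ) : ℕ :=
  {u : List α | u.length = n ∧ IsFactorW w u}.ncard

/-- A Sturmian word: aperiodic binary word with factor complexity `n + 1`. -/
def SturmianW (w : ℕ → Bool) : Prop :=
  ¬ UltPeriodicW w ∧ ∀ n, complexityW w n = n + 1

/-- Right special factor of a binary word. -/
def RightSpecial (w : ℕ → Bool) (B : List Bool) : Prop :=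
  IsFactorW w (B ++ [false]) ∧ IsFactorW w (B ++ [true])

/-- Left special factor of a binary word. -/
def LeftSpecial (w : ℕ → Bool) (B : List Bool) : Prop :=
  IsFactorW w (false :: B) ∧ IsFactorW w (true :: B)

/-- Bispecial factor of a binary word. -/
def Bispecial (w : ℕ → Bool) (B : List Bool) : Prop :=
  RightSpecial w B ∧ LeftSpecial w B

/-- `w` is `c`-balanced. -/
def CBalanced {α : Type*} [DecidableEq α] (w : ℕ → α) (c : ℕ) : Prop :=
  ∀ u v : List α, IsFactorW w u → IsFactorW w v → u.length = v.length →
    ∀ a : α, |((u.count a : ℤ) - (v.count a : ℤ))| ≤ (c : ℤ)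

lemma wa_length {α : Type*} (w : ℕ → α) (i n : ℕ) : (wordAt w i n).length = n := by
  simp [wordAt]

lemma wa_get {α : Type*} (w : ℕ → α) (i n k : ℕ) (hk : k < n) :
    (wordAt w i n)[k]'(by simpa [wa_length] using hk) = w (i + k) := by
  simp [wordAt]

lemma wa_ext {α : Type*} (w : ℕ → α) (i i' n : ℕ)
    (h : ∀ k < n, w (i + k) = w (i' + k)) : wordAt w i n = wordAt w i' n := by
  apply List.ext_getElem (by simp [wa_length])
  intro k h1 h2
  rw [wa_get w i n k (by simpa [wa_length] using h1),
    wa_get w i' n k (by simpa [wa_length] using h2)]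
  exact h k (by simpa [wa_length] using h1)

lemma wa_get' {α : Type*} (w : ℕ → α) (i n k : ℕ) (u : List α) (hu : u = wordAt w i n)
    (hk : k < n) : w (i + k) = u[k]'(by simpa [hu, wa_length] using hk) := by
  subst hu; rw [wa_get w i n k hk]

lemma bool_ne_ne (x y a : Bool) (hx : x ≠ a) (hy : y ≠ a) : x = y := by
  revert x y a; decide

lemma wa_one (w : ℕ → Bool) (i : ℕ) : wordAt w i 1 = [w i] := by
  simp [wordAt, List.range_succ]

lemma mem_occ_iff (w : ℕ → Bool) (a : Bool) (i : ℕ) : i ∈ occW w [a] ↔ w i = a := by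
  simp only [occW, Set.mem_setOf_eq, List.length_singleton, wa_one]
  constructor
  · intro h; exact (List.singleton_injective h).symm
  · intro h; rw [h]

lemma mem_abOcc_iff (w : ℕ → Bool) (a : Bool) (i : ℕ) : i ∈ abOcc w [a] ↔ w i = a := by
  simp only [abOcc, Set.mem_setOf_eq, List.length_singleton, wa_one]
  constructor
  · intro h
    have := h a
    simp [List.count_singleton] at this
    by_contra hne
    simp [List.count_cons, hne] at this
  · intro h; rw [h]; intro c; rfl

lemma semiAb_eq_ret (w : ℕ → Bool) (a : Bool) :
    semiAbReturns w [a] = returnWords w [a] := by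
  have : abOcc w [a] = occW w [a] := by
    ext i; rw [mem_abOcc_iff, mem_occ_iff]
  unfold semiAbReturns returnWords
  rw [this]

/-- A consecutive pair of occurrences of `a`. -/
def PairP (w : ℕ → Bool) (a : Bool) (i j : ℕ) : Prop :=
  w i = a ∧ w j = a ∧ i < j ∧ ∀ k, i < k → k < j → w k ≠ a

lemma ret_char (w : ℕ → Bool) (a : Bool) :
    returnWords w [a] = {r | ∃ i j, PairP w a i j ∧ r = wordAt w i (j - i)} := by
  ext r
  simp only [returnWords, Set.mem_setOf_eq, mem_occ_iff, PairP]
  constructor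
  · rintro ⟨i, j, h1, h2, h3, h4, h5⟩
    exact ⟨i, j, ⟨h1, h2, h3, fun k hk1 hk2 => (h4 k hk1 hk2)⟩, h5⟩
  · rintro ⟨i, j, ⟨h1, h2, h3, h4⟩, h5⟩
    exact ⟨i, j, h1, h2, h3, h4, h5⟩

/-- Each letter occurs beyond any bound in a non-ultimately-periodic word. -/
lemma occ_inf (w : ℕ → Bool) (hna : ¬ UltPeriodicW w) (c : Bool) (N : ℕ) :
    ∃ n, N ≤ n ∧ w n = c := by
  by_contra h
  push_neg at h
  apply hna
  refine ⟨1, one_pos, N, fun n hn => ?_⟩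
  exact bool_ne_ne _ _ c (h (n + 1) (by omega)) (h n hn)

/-- Every occurrence has a next one, forming a consecutive pair. -/
lemma next_pair (w : ℕ → Bool) (a : Bool) (hna : ¬ UltPeriodicW w) (i : ℕ) (hi : w i = a) :
    ∃ j, PairP w a i j := by
  have hex : ∃ k, i < k ∧ w k = a := by
    obtain ⟨n, hn1, hn2⟩ := occ_inf w hna a (i + 1)
    exact ⟨n, by omega, hn2⟩
  refine ⟨Nat.find hex, hi, (Nat.find_spec hex).2, (Nat.find_spec hex).1, ?_⟩
  intro k hk1 hk2 hk3
  exact Nat.find_min hex hk2 ⟨hk1, hk3⟩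

def GapsSet (w : ℕ → Bool) (a : Bool) : Set ℕ := {d | ∃ i j, PairP w a i j ∧ d = j - i}

lemma pair_word_eq (w : ℕ → Bool) (a : Bool) {i j i' j' : ℕ}
    (h1 : PairP w a i j) (h2 : PairP w a i' j') (hd : j - i = j' - i') :
    wordAt w i (j - i) = wordAt w i' (j' - i') := by
  rw [← hd]
  apply wa_ext
  intro m hm
  rcases Nat.eq_zero_or_pos m with rfl | hm0
  · simp [h1.1, h2.1]
  · exact bool_ne_ne _ _ a (h1.2.2.2 (i + m) (by omega) (by omega))
      (h2.2.2.2 (i' + m) (by omega) (by omega))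

lemma after_occ (w : ℕ → Bool) (a : Bool) (hna : ¬ UltPeriodicW w) (g : ℕ)
    (hmin : ∀ d ∈ GapsSet w a, g ≤ d) (i : ℕ) (hi : w i = a)
    (m : ℕ) (h1 : 1 ≤ m) (h2 : m < g) : w (i + m) ≠ a := by
  obtain ⟨j, hp⟩ := next_pair w a hna i hi
  have hle := hmin (j - i) ⟨i, j, hp, rfl⟩
  have hij := hp.2.2.1
  exact hp.2.2.2 (i + m) (by omega) (by omega)

lemma no_big_gap (w : ℕ → Bool) (a : Bool) (hst : SturmianW w) (g : ℕ)
    (hmin : ∀ d ∈ GapsSet w a, g ≤ d) (p q : ℕ) (hpq : PairP w a p q) (hgpq : q - p = g)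
    (i j : ℕ) (hij : PairP w a i j) : j - i ≤ g + 1 := by
  have hq : q = p + g := by have := hpq.2.2.1; omega
  have hg1 : 1 ≤ g := by have := hpq.2.2.1; omega
  by_contra hbig
  push_neg at hbig
  have hd2 : i + g + 2 ≤ j := by have := hij.2.2.1; omega
  set pos : ℕ → ℕ := fun k => if k = 0 then i else if k ≤ g then j - k else
    if k = g + 1 then p else i + 1 with hpos
  have hpos0 : pos 0 = i := if_pos rfl
  have hposk : ∀ k, 1 ≤ k → k ≤ g → pos k = j - k := by
    intro k hk1 hk2
    simp only [hpos]
    rw [if_neg (by omega), if_pos hk2]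
  have hposp : pos (g + 1) = p := by
    simp only [hpos]
    rw [if_neg (by omega), if_neg (by omega)]
    simp
  have hposl : pos (g + 2) = i + 1 := by
    simp only [hpos]
    rw [if_neg (by omega), if_neg (by omega), if_neg (by omega)]
  -- the letter pattern of each candidate factor
  have key : ∀ k ≤ g + 2, ∀ m ≤ g,
      (w (pos k + m) = a ↔ ((k ≤ g ∧ m = k) ∨ (k = g + 1 ∧ (m = 0 ∨ m = g)))) := by
    intro k hk m hm
    rcases Nat.lt_or_ge k (g + 1) with hkg | hkg
    · -- k ≤ g
      have hkg' : k ≤ g := by omega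
      rcases Nat.eq_zero_or_pos k with rfl | hk1
      · rw [hpos0]
        constructor
        · intro hwa
          rcases Nat.eq_zero_or_pos m with rfl | hm1
          · exact Or.inl ⟨by omega, rfl⟩
          · exact absurd hwa (hij.2.2.2 (i + m) (by omega) (by omega))
        · rintro (⟨-, rfl⟩ | ⟨h, -⟩)
          · simpa using hij.1
          · omega
      · rw [hposk k hk1 hkg']
        rcases lt_trichotomy m k with hmk | rfl | hmk
        · constructor
          · intro hwa
            exact absurd hwa (hij.2.2.2 (j - k + m) (by omega) (by omega))
          · rintro (⟨-, h⟩ | ⟨h, -⟩) <;> omega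
        · have heq : j - m + m = j := by omega
          rw [heq]
          exact ⟨fun _ => Or.inl ⟨hkg', rfl⟩, fun _ => hij.2.1⟩
        · have heq : j - k + m = j + (m - k) := by omega
          rw [heq]
          constructor
          · intro hwa
            exact absurd hwa
              (after_occ w a hst.1 g hmin j hij.2.1 (m - k) (by omega) (by omega))
          · rintro (⟨-, h⟩ | ⟨h, -⟩) <;> omega
    · rcases Nat.eq_or_lt_of_le hkg with hk1 | hk2
      · -- k = g + 1
        rw [← hk1, hposp]
        constructor
        · intro hwa
          rcases Nat.eq_zero_or_pos m with rfl | hm1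
          · exact Or.inr ⟨rfl, Or.inl rfl⟩
          · rcases Nat.eq_or_lt_of_le hm with rfl | hmg
            · exact Or.inr ⟨rfl, Or.inr rfl⟩
            · exact absurd hwa (hpq.2.2.2 (p + m) (by omega) (by omega))
        · rintro (⟨h, -⟩ | ⟨-, (rfl | rfl)⟩)
          · omega
          · simpa using hpq.1
          · rw [← hq]; exact hpq.2.1
      · -- k = g + 2
        have hk1 : k = g + 2 := by omega
        rw [hk1, hposl]
        constructor
        · intro hwa
          exact absurd hwa (hij.2.2.2 (i + 1 + m) (by omega) (by omega))
        · rintro (⟨h, -⟩ | ⟨h, -⟩) <;> omega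
  -- injectivity on Finset.range (g+3)
  have hinj : Set.InjOn (fun k => wordAt w (pos k) (g + 1)) ↑(Finset.range (g + 3)) := by
    intro k₁ hk₁ k₂ hk₂ heq
    simp only [Finset.coe_range, Set.mem_Iio] at hk₁ hk₂
    simp only at heq
    have hW : ∀ m ≤ g, w (pos k₁ + m) = w (pos k₂ + m) := by
      intro m hm
      have h1 := wa_get w (pos k₁) (g + 1) m (by omega)
      have h2 := wa_get w (pos k₂) (g + 1) m (by omega)
      rw [← h1, ← h2]
      exact List.getElem_of_eq heq _
    have E : ∀ m ≤ g, ((k₁ ≤ g ∧ m = k₁) ∨ (k₁ = g + 1 ∧ (m = 0 ∨ m = g)) ↔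
        ((k₂ ≤ g ∧ m = k₂) ∨ (k₂ = g + 1 ∧ (m = 0 ∨ m = g)))) := by
      intro m hm
      rw [← key k₁ (by omega) m hm, hW m hm, key k₂ (by omega) m hm]
    rcases Nat.lt_or_ge k₁ (g + 1) with h1 | h1
    · have hQ := (E k₁ (by omega)).mp (Or.inl ⟨by omega, rfl⟩)
      rcases hQ with ⟨-, h⟩ | ⟨hk2, h⟩
      · omega
      · have h0 := (E 0 (by omega)).mpr (Or.inr ⟨hk2, Or.inl rfl⟩)
        have hgg := (E g (by omega)).mpr (Or.inr ⟨hk2, Or.inr rfl⟩)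
        rcases h0 with ⟨-, h0⟩ | ⟨h0, -⟩ <;> rcases hgg with ⟨-, hgg⟩ | ⟨hgg, -⟩ <;> omega
    · rcases Nat.lt_or_ge k₂ (g + 1) with h2 | h2
      · have hQ := (E k₂ (by omega)).mpr (Or.inl ⟨by omega, rfl⟩)
        rcases hQ with ⟨-, h⟩ | ⟨hk1, h⟩
        · omega
        · have h0 := (E 0 (by omega)).mp (Or.inr ⟨hk1, Or.inl rfl⟩)
          have hgg := (E g (by omega)).mp (Or.inr ⟨hk1, Or.inr rfl⟩)
          rcases h0 with ⟨-, h0⟩ | ⟨h0, -⟩ <;> rcases hgg with ⟨-, hgg⟩ | ⟨hgg, -⟩ <;> omega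
      · rcases Nat.eq_or_lt_of_le h1 with hk1 | hk1 <;>
          rcases Nat.eq_or_lt_of_le h2 with hk2 | hk2
        · omega
        · have hQ := (E 0 (by omega)).mp (Or.inr ⟨by omega, Or.inl rfl⟩)
          rcases hQ with ⟨-, h⟩ | ⟨h, -⟩ <;> omega
        · have hQ := (E 0 (by omega)).mpr (Or.inr ⟨by omega, Or.inl rfl⟩)
          rcases hQ with ⟨-, h⟩ | ⟨h, -⟩ <;> omega
        · omega
  -- cardinality contradiction
  have hFfin : {u : List Bool | u.length = g + 1 ∧ IsFactorW w u}.Finite :=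
    (List.finite_length_eq Bool (g + 1)).subset fun u hu => hu.1
  have hsub : ↑((Finset.range (g + 3)).image fun k => wordAt w (pos k) (g + 1)) ⊆
      {u : List Bool | u.length = g + 1 ∧ IsFactorW w u} := by
    intro u hu
    simp only [Finset.coe_image, Set.mem_image] at hu
    obtain ⟨k, -, rfl⟩ := hu
    exact ⟨wa_length w _ _, ⟨pos k, by rw [wa_length]⟩⟩
  have hcard : ((Finset.range (g + 3)).image fun k => wordAt w (pos k) (g + 1)).card = g + 3 := by
    rw [Finset.card_image_of_injOn hinj, Finset.card_range]
  have hle : g + 3 ≤ {u : List Bool | u.length = g + 1 ∧ IsFactorW w u}.ncard := by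
    rw [← hcard, ← Set.ncard_coe_finset]
    exact Set.ncard_le_ncard hsub hFfin
  have hcomp := hst.2 (g + 1)
  unfold complexityW at hcomp
  omega

lemma exists_succ_gap (w : ℕ → Bool) (a : Bool) (hst : SturmianW w)
    (p q : ℕ) (hpq : PairP w a p q) (hmin : ∀ d ∈ GapsSet w a, q - p ≤ d) :
    ∃ i' j', PairP w a i' j' ∧ j' - i' = (q - p) + 1 := by
  have hg1 : 1 ≤ q - p := by have := hpq.2.2.1; omega
  by_contra hno
  push_neg at hno
  have hall : ∀ i' j', PairP w a i' j' → j' = i' + (q - p) := by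
    intro i' j' hp'
    have h1 := hmin (j' - i') ⟨i', j', hp', rfl⟩
    have h2 := no_big_gap w a hst (q - p) hmin p q hpq rfl i' j' hp'
    have h3 := hno i' j' hp'
    have := hp'.2.2.1
    omega
  apply hst.1
  refine ⟨q - p, by omega, p, fun n hn => ?_⟩
  have hi_le : Nat.findGreatest (fun k => w k = a) n ≤ n := Nat.findGreatest_le n
  have hi_a : w (Nat.findGreatest (fun k => w k = a) n) = a := Nat.findGreatest_spec (P := fun k => w k = a) hn hpq.1
  obtain ⟨j₁, hp1⟩ := next_pair w a hst.1 _ hi_a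
  have hj₁ : j₁ = Nat.findGreatest (fun k => w k = a) n + (q - p) := hall _ j₁ hp1
  have hn_lt : n < Nat.findGreatest (fun k => w k = a) n + (q - p) := by
    by_contra hge
    push_neg at hge
    have hwa : w (Nat.findGreatest (fun k => w k = a) n + (q - p)) = a := by
      rw [← hj₁]; exact hp1.2.1
    exact Nat.findGreatest_is_greatest (P := fun k => w k = a) (by omega) hge hwa
  obtain ⟨j₂, hp2⟩ := next_pair w a hst.1 (Nat.findGreatest (fun k => w k = a) n + (q - p))
    (by rw [← hj₁]; exact hp1.2.1)
  have hj₂ : j₂ = Nat.findGreatest (fun k => w k = a) n + (q - p) + (q - p) := hall _ _ hp2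
  rcases eq_or_lt_of_le hi_le with heq | hlt
  · rw [← heq, show Nat.findGreatest (fun k => w k = a) n + (q - p) = j₁ by omega,
      hp1.2.1, hi_a]
  · have h1 : w n ≠ a := hp1.2.2.2 n hlt (by omega)
    have h2 : w (n + (q - p)) ≠ a := hp2.2.2.2 (n + (q - p)) (by omega) (by omega)
    exact bool_ne_ne _ _ a h2 h1

theorem stmt18' (w : ℕ → Bool) (hst : SturmianW w) (a : Bool) (ha : IsFactorW w [a]) :
    (∃ f : Fin 2 → List Bool, Function.Injective f ∧ semiAbReturns w [a] = Set.range f) ∧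
      semiAbReturns w [a] = returnWords w [a] := by
  obtain ⟨i₀, hfac⟩ := ha
  rw [List.length_singleton, wa_one] at hfac
  have hi₀ : w i₀ = a := (List.singleton_injective hfac).symm
  -- the minimal gap pair (p, q)
  have hGne : (GapsSet w a).Nonempty := by
    obtain ⟨j, hp⟩ := next_pair w a hst.1 i₀ hi₀
    exact ⟨j - i₀, i₀, j, hp, rfl⟩
  obtain ⟨p, q, hpq, hgpq⟩ := Nat.sInf_mem hGne
  have hmin : ∀ d ∈ GapsSet w a, q - p ≤ d := by
    intro d hd
    rw [← hgpq]
    exact Nat.sInf_le hd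
  obtain ⟨p', q', hpq', hgpq'⟩ := exists_succ_gap w a hst p q hpq hmin
  -- the two return words
  have hret : returnWords w [a] = {wordAt w p (q - p), wordAt w p' (q' - p')} := by
    rw [ret_char]
    ext r
    simp only [Set.mem_setOf_eq, Set.mem_insert_iff, Set.mem_singleton_iff]
    constructor
    · rintro ⟨i, j, hij, rfl⟩
      have h1 := hmin (j - i) ⟨i, j, hij, rfl⟩
      have h2 := no_big_gap w a hst (q - p) hmin p q hpq rfl i j hij
      rcases (by omega : j - i = q - p ∨ j - i = q' - p') with hcase | hcase
      · exact Or.inl (pair_word_eq w a hij hpq hcase)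
      · exact Or.inr (pair_word_eq w a hij hpq' hcase)
    · rintro (rfl | rfl)
      · exact ⟨p, q, hpq, rfl⟩
      · exact ⟨p', q', hpq', rfl⟩
  have hne : wordAt w p (q - p) ≠ wordAt w p' (q' - p') := by
    intro h
    have := congrArg List.length h
    rw [wa_length, wa_length, hgpq'] at this
    omega
  refine ⟨⟨fun t => if t = 0 then wordAt w p (q - p) else wordAt w p' (q' - p'), ?_, ?_⟩,
    semiAb_eq_ret w a⟩
  · intro x y h
    fin_cases x <;> fin_cases y <;> simp_all
  · rw [semiAb_eq_ret, hret]
    ext u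
    simp only [Set.mem_insert_iff, Set.mem_singleton_iff, Set.mem_range]
    constructor
    · rintro (rfl | rfl)
      · exact ⟨0, by simp⟩
      · exact ⟨1, by simp⟩
    · rintro ⟨t, rfl⟩
      fin_cases t <;> simp

/-- Each letter of a Sturmian word has exactly two semi-abelian returns, which coincide
with its ordinary return words. -/
theorem stmt18 (w : ℕ → Bool) (hst : SturmianW w) (a : Bool) (ha : IsFactorW w [a]) :
    ExactlyKSemiAbReturns w [a] 2 ∧ semiAbReturns w [a] = returnWords w [a] := by
  obtain ⟨h1, h2⟩ := stmt18' w hst a ha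
  exact ⟨h1, h2⟩
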